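/- Core-tensor term of the recovery lower bound. There exists an absolute constant c > 0 such that the following holds. Fix an order d ≥ 2, dimensions p_1,…,p_d, ranks r_1,…,r_d with 1 ≤ r_l, sparsity levels s_1,…,s_d with 3 r_l ≤ s_l ≤ p_l for every l, a subset J_s ⊆ {1,…,d} with s_l = p_l for every l ∉ J_s, and σ > 0. Then for every measurable estimator X̂ assigning to each p_1×⋯×p_d tensor Y a p_1×⋯×p_d tensor X̂(Y), there exists a tensor X in the class F_{p,r,s}(J_s) such that the expectation over Z of ‖X̂(X+Z) − X‖_F² is at least c σ² ∏_{l=1}^d r_l. -/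

import Mathlib

open MeasureTheory ProbabilityTheory Matrix BigOperators

noncomputable section

/-- Index set of an order-`d` tensor with mode sizes `p`. -/
abbrev TIdx {d : ℕ} (p : Fin d → ℕ) := ∀ l, Fin (p l)

/-- Squared Frobenius norm of a tensor. -/
def tfrobSq {d : ℕ} {p : Fin d → ℕ} (X : TIdx p → ℝ) : ℝ := ∑ i, X i ^ 2

/-- Tucker product `⟦S; U_1, …, U_d⟧`. -/
def tucker {d : ℕ} {p r : Fin d → ℕ} (S : TIdx r → ℝ)
    (U : ∀ l, Matrix (Fin (p l)) (Fin (r l)) ℝ) : TIdx p → ℝ :=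
  fun i => ∑ j : TIdx r, S j * ∏ l, U l (i l) (j l)

/-- A matrix is `s`-row-sparse if at most `s` of its rows are nonzero. -/
def rowSparse {ι κ : Type*} (s : ℕ) (U : Matrix ι κ ℝ) : Prop :=
  Set.ncard {i | U i ≠ 0} ≤ s

/-- The class `F_{p,r,s}(J_s)` of simultaneously sparse and Tucker low-rank tensors. -/
def inClassF {d : ℕ} (p r s : Fin d → ℕ) (Js : Finset (Fin d)) (X : TIdx p → ℝ) : Prop :=
  ∃ (S : TIdx r → ℝ) (U : ∀ l, Matrix (Fin (p l)) (Fin (r l)) ℝ),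
    (∀ l, (U l)ᵀ * U l = 1) ∧ (∀ l, l ∈ Js → rowSparse (s l) (U l)) ∧ X = tucker S U

/-- Law of a tensor with i.i.d. `N(0, σ²)` entries. -/
def gaussianTensor {d : ℕ} (p : Fin d → ℕ) (σ : ℝ) : Measure (TIdx p → ℝ) :=
  Measure.pi fun _ => gaussianReal 0 ⟨σ ^ 2, sq_nonneg σ⟩

open Real Finset Function
/-- embedding of core indices -/
def embIdx {d : ℕ} {p r : Fin d → ℕ} (hrp : ∀ l, r l ≤ p l) (j : TIdx r) : TIdx p :=
  fun l => Fin.castLE (hrp l) (j l)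

lemma embIdx_injective {d : ℕ} {p r : Fin d → ℕ} (hrp : ∀ l, r l ≤ p l) :
    Function.Injective (embIdx hrp) := by
  intro a b hab
  funext l
  have := congrFun hab l
  exact Fin.castLE_injective (hrp l) this

/-- embedding of a core tensor -/
def embCore {d : ℕ} {p r : Fin d → ℕ} (hrp : ∀ l, r l ≤ p l) (θ : TIdx r → ℝ) : TIdx p → ℝ :=
  fun i => if h : ∀ l, (i l : ℕ) < r l then θ (fun l => ⟨i l, h l⟩) else 0

lemma embCore_embIdx {d : ℕ} {p r : Fin d → ℕ} (hrp : ∀ l, r l ≤ p l) (θ : TIdx r → ℝ)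
    (j : TIdx r) : embCore hrp θ (embIdx hrp j) = θ j := by
  have h : ∀ l, ((embIdx hrp j l : ℕ)) < r l := fun l => (j l).2
  rw [embCore, dif_pos h]
  congr 1

lemma embCore_of_ne {d : ℕ} {p r : Fin d → ℕ} (hrp : ∀ l, r l ≤ p l) (θ : TIdx r → ℝ)
    (i : TIdx p) (hi : ∀ j : TIdx r, i ≠ embIdx hrp j) : embCore hrp θ i = 0 := by
  rw [embCore]
  split
  · rename_i h
    exact absurd (funext fun l => rfl : i = embIdx hrp (fun l => ⟨i l, h l⟩)) (hi _)
  · rfl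

lemma embCore_mem_class {d : ℕ} (p r s : Fin d → ℕ) (Js : Finset (Fin d))
    (hrp : ∀ l, r l ≤ p l) (hrs : ∀ l, r l ≤ s l) (θ : TIdx r → ℝ) :
    inClassF p r s Js (embCore hrp θ) := by
  refine ⟨θ, fun l => Matrix.of (fun a b => if a = Fin.castLE (hrp l) b then 1 else 0), ?_, ?_, ?_⟩
  · intro l
    ext b b'
    simp only [Matrix.mul_apply, Matrix.transpose_apply, Matrix.of_apply, Matrix.one_apply]
    rw [Finset.sum_eq_single (Fin.castLE (hrp l) b)]
    · rw [if_pos rfl, one_mul]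
      by_cases h : b = b'
      · simp [h]
      · rw [if_neg h, if_neg (fun hc => h (Fin.castLE_injective _ hc))]
    · intro a _ ha
      rw [if_neg ha, zero_mul]
    · intro h; exact absurd (Finset.mem_univ _) h
  · intro l _
    have hsub : {a : Fin (p l) |
        Matrix.of (fun a b => if a = Fin.castLE (hrp l) b then (1:ℝ) else 0) a ≠ 0}
        ⊆ Set.range (Fin.castLE (hrp l)) := by
      intro a ha
      simp only [Set.mem_setOf_eq, ne_eq] at ha
      by_contra hc
      apply ha
      funext b
      simp only [Matrix.of_apply]
      rw [if_neg]
      · rfl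
      · intro h; exact hc ⟨b, h.symm⟩
    refine le_trans (le_trans (Set.ncard_le_ncard hsub (Set.finite_range _)) ?_) (hrs l)
    have h1 : Set.range (Fin.castLE (hrp l)) = ↑(Finset.univ.image (Fin.castLE (hrp l))) := by
      simp [Finset.coe_image]
    rw [h1, Set.ncard_coe_finset,
      Finset.card_image_of_injective _ (Fin.castLE_injective _), Finset.card_univ,
      Fintype.card_fin]
  · funext i
    rw [tucker]
    simp only [Matrix.of_apply]
    have hprod : ∀ j : TIdx r, (∏ l, if i l = Fin.castLE (hrp l) (j l) then (1:ℝ) else 0)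
        = if i = embIdx hrp j then 1 else 0 := by
      intro j
      rw [Finset.prod_boole]
      congr 1
      simp only [eq_iff_iff]
      constructor
      · intro h; funext l; exact h l (Finset.mem_univ l)
      · intro h l _; exact congrFun h l
    simp_rw [hprod]
    by_cases h : ∀ l, (i l : ℕ) < r l
    · have hj : i = embIdx hrp (fun l => ⟨i l, h l⟩) := by funext l; rfl
      rw [embCore, dif_pos h]
      rw [Finset.sum_eq_single (fun l => (⟨i l, h l⟩ : Fin (r l)))]
      · rw [if_pos hj, mul_one]
      · intro j _ hj'
        rw [if_neg, mul_zero]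
        intro hc
        apply hj'
        funext l
        have := congrFun hc l
        rw [hj] at this
        exact (Fin.castLE_injective (hrp l) this).symm
      · intro hmem; exact absurd (Finset.mem_univ _) hmem
    · have : ∀ j : TIdx r, i ≠ embIdx hrp j := by
        intro j hc
        apply h
        intro l
        rw [hc]
        exact (j l).2
      rw [embCore_of_ne hrp θ i this]
      rw [Finset.sum_eq_zero]
      intro j _
      rw [if_neg (this j), mul_zero]



lemma var_ne_zero {σ : ℝ} (hσ : 0 < σ) : (⟨σ^2, sq_nonneg σ⟩ : NNReal) ≠ 0 := by
  intro h
  have : σ ^ 2 = 0 := congrArg NNReal.toReal h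
  exact (pow_ne_zero 2 hσ.ne') this

/-- Two-point testing lower bound in one dimension. -/
lemma oneDim_bound {σ : ℝ} (hσ : 0 < σ) {g : ℝ → ℝ} (hg : Measurable g) :
    ENNReal.ofReal (gaussianPDFReal 0 ⟨σ^2, sq_nonneg σ⟩ σ * (σ^2/2) * σ)
      ≤ (∫⁻ t, ENNReal.ofReal (g t ^ 2) ∂gaussianReal 0 ⟨σ^2, sq_nonneg σ⟩)
        + ∫⁻ t, ENNReal.ofReal ((g (σ + t) - σ) ^ 2) ∂gaussianReal 0 ⟨σ^2, sq_nonneg σ⟩ := by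
  set v : NNReal := ⟨σ^2, sq_nonneg σ⟩ with hv_def
  have hv : v ≠ 0 := var_ne_zero hσ
  have hm0 : Measurable fun t => ENNReal.ofReal (g t ^ 2) :=
    ENNReal.measurable_ofReal.comp ((hg.pow_const 2))
  have hm1 : Measurable fun t => ENNReal.ofReal ((g t - σ) ^ 2) :=
    ENNReal.measurable_ofReal.comp (((hg.sub_const σ).pow_const 2))
  -- rewrite second integral as integral against gaussianReal σ v
  have h2 : (∫⁻ t, ENNReal.ofReal ((g (σ + t) - σ) ^ 2) ∂gaussianReal 0 v)
      = ∫⁻ u, ENNReal.ofReal ((g u - σ) ^ 2) ∂gaussianReal σ v := by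
    have := lintegral_map (μ := gaussianReal 0 v) hm1 (measurable_const_add σ)
    rw [gaussianReal_map_const_add (μ := 0) (v := v) σ, zero_add] at this
    exact this.symm
  rw [h2, gaussianReal_of_var_ne_zero _ hv, gaussianReal_of_var_ne_zero _ hv,
    lintegral_withDensity_eq_lintegral_mul _ (measurable_gaussianPDF _ _) hm0,
    lintegral_withDensity_eq_lintegral_mul _ (measurable_gaussianPDF _ _) hm1]
  simp only [Pi.mul_apply]
  rw [← lintegral_add_left (f := fun a => gaussianPDF 0 v a * ENNReal.ofReal (g a ^ 2)) ((measurable_gaussianPDF 0 v).mul hm0)]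
  set m : ℝ := gaussianPDFReal 0 v σ with hm_def
  have hmpos : 0 < m := gaussianPDFReal_pos 0 v σ hv
  calc ENNReal.ofReal (m * (σ^2/2) * σ)
      = ∫⁻ _ in Set.Icc 0 σ, ENNReal.ofReal (m * (σ^2/2)) ∂volume := by
        rw [setLIntegral_const, Real.volume_Icc, sub_zero,
          ← ENNReal.ofReal_mul (by positivity)]
    _ ≤ ∫⁻ x in Set.Icc 0 σ,
          gaussianPDF 0 v x * ENNReal.ofReal (g x ^ 2)
          + gaussianPDF σ v x * ENNReal.ofReal ((g x - σ) ^ 2) ∂volume := by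
        refine setLIntegral_mono (((measurable_gaussianPDF 0 v).mul hm0).add
          ((measurable_gaussianPDF σ v).mul hm1)) ?_
        intro x hx
        obtain ⟨hx0, hxσ⟩ := hx
        have hvpos : (0:ℝ) < 2 * (v:ℝ) := by
          have : (v:ℝ) = σ^2 := rfl
          rw [this]; positivity
        have key : ∀ c : ℝ, (x - c)^2 ≤ σ^2 →
            ENNReal.ofReal m ≤ gaussianPDF c v x := by
          intro c hc
          refine ENNReal.ofReal_le_ofReal ?_
          rw [hm_def, gaussianPDFReal_def, gaussianPDFReal_def]
          have h1 : (-(σ - 0)^2 / (2*(v:ℝ))) ≤ (-(x - c)^2 / (2*(v:ℝ))) := by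
            apply div_le_div_of_nonneg_right ?_ hvpos.le
            nlinarith
          have h2 : rexp (-(σ - 0)^2 / (2*(v:ℝ))) ≤ rexp (-(x - c)^2 / (2*(v:ℝ))) :=
            Real.exp_le_exp.mpr h1
          have h3 : (0:ℝ) ≤ (√(2 * π * v))⁻¹ := by positivity
          exact mul_le_mul_of_nonneg_left h2 h3
        have hpdf0 : ENNReal.ofReal m ≤ gaussianPDF 0 v x :=
          key 0 (by nlinarith)
        have hpdf1 : ENNReal.ofReal m ≤ gaussianPDF σ v x :=
          key σ (by nlinarith)
        have hsum : ENNReal.ofReal (σ^2/2) ≤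
            ENNReal.ofReal (g x ^ 2) + ENNReal.ofReal ((g x - σ) ^ 2) := by
          rw [← ENNReal.ofReal_add (sq_nonneg _) (sq_nonneg _)]
          exact ENNReal.ofReal_le_ofReal (by nlinarith [sq_nonneg (2 * g x - σ)])
        calc ENNReal.ofReal (m * (σ^2/2))
            = ENNReal.ofReal m * ENNReal.ofReal (σ^2/2) :=
              ENNReal.ofReal_mul hmpos.le
          _ ≤ ENNReal.ofReal m * (ENNReal.ofReal (g x ^ 2)
                + ENNReal.ofReal ((g x - σ) ^ 2)) :=
              mul_le_mul_right hsum _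
          _ = ENNReal.ofReal m * ENNReal.ofReal (g x ^ 2)
                + ENNReal.ofReal m * ENNReal.ofReal ((g x - σ) ^ 2) := by
              rw [mul_add]
          _ ≤ gaussianPDF 0 v x * ENNReal.ofReal (g x ^ 2)
                + gaussianPDF σ v x * ENNReal.ofReal ((g x - σ) ^ 2) :=
              add_le_add (mul_le_mul_left hpdf0 _) (mul_le_mul_left hpdf1 _)
    _ ≤ ∫⁻ x, gaussianPDF 0 v x * ENNReal.ofReal (g x ^ 2)
          + gaussianPDF σ v x * ENNReal.ofReal ((g x - σ) ^ 2) ∂volume :=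
        setLIntegral_le_lintegral _ _




/-- Two-point lower bound for estimating one coordinate, in the presence of
nuisance coordinates. -/
lemma pair_bound {δ : Type*} [Fintype δ] [DecidableEq δ]
    {σ : ℝ} (hσ : 0 < σ)
    {G : (δ → ℝ) → ℝ} (hG : Measurable G) (X₀ : δ → ℝ) (i₀ : δ) (hX₀ : X₀ i₀ = 0) :
    ENNReal.ofReal (gaussianPDFReal 0 ⟨σ^2, sq_nonneg σ⟩ σ * (σ^2/2) * σ)
      ≤ (∫⁻ Z, ENNReal.ofReal ((G (fun i => X₀ i + Z i))^2)
            ∂Measure.pi (fun _ : δ => gaussianReal 0 ⟨σ^2, sq_nonneg σ⟩))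
        + ∫⁻ Z, ENNReal.ofReal
            ((G (fun i => X₀ i + (if i = i₀ then σ else 0) + Z i) - σ)^2)
            ∂Measure.pi (fun _ : δ => gaussianReal 0 ⟨σ^2, sq_nonneg σ⟩) := by
  set v : NNReal := ⟨σ^2, sq_nonneg σ⟩ with hv_def
  set μ : δ → Measure ℝ := fun _ => gaussianReal 0 v with hμ_def
  set B : ENNReal := ENNReal.ofReal (gaussianPDFReal 0 v σ * (σ^2/2) * σ) with hB_def
  set F₀ : (δ → ℝ) → ENNReal := fun Z => ENNReal.ofReal ((G (fun i => X₀ i + Z i))^2)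
    with hF₀_def
  set F₁ : (δ → ℝ) → ENNReal := fun Z => ENNReal.ofReal
      ((G (fun i => X₀ i + (if i = i₀ then σ else 0) + Z i) - σ)^2) with hF₁_def
  have hshift : ∀ (W : δ → ℝ), Measurable fun (Z : δ → ℝ) => (fun i => W i + Z i) :=
    fun W => by fun_prop
  have hF₀m : Measurable F₀ :=
    ENNReal.measurable_ofReal.comp ((hG.comp (hshift X₀)).pow_const 2)
  have hF₁m : Measurable F₁ :=
    ENNReal.measurable_ofReal.comp
      (((hG.comp (hshift _)).sub_const σ).pow_const 2)
  have x₀ : δ → ℝ := fun _ => 0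
  rw [lintegral_eq_lmarginal_univ (μ := μ) (f := F₀) x₀,
    lintegral_eq_lmarginal_univ (μ := μ) (f := F₁) x₀,
    lmarginal_erase' (μ := μ) F₀ hF₀m (Finset.mem_univ i₀),
    lmarginal_erase' (μ := μ) F₁ hF₁m (Finset.mem_univ i₀)]
  have hsingle₀ : (fun x => ∫⁻ t, F₀ (Function.update x i₀ t) ∂μ i₀)
      = ∫⋯∫⁻_{i₀}, F₀ ∂μ := by
    funext x; rw [lmarginal_singleton]
  have hsingle₁ : (fun x => ∫⁻ t, F₁ (Function.update x i₀ t) ∂μ i₀)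
      = ∫⋯∫⁻_{i₀}, F₁ ∂μ := by
    funext x; rw [lmarginal_singleton]
  rw [hsingle₀, hsingle₁]
  -- pointwise bound
  have hpt : ∀ x : δ → ℝ, B ≤ (∫⋯∫⁻_{i₀}, F₀ ∂μ) x + (∫⋯∫⁻_{i₀}, F₁ ∂μ) x := by
    intro x
    rw [lmarginal_singleton, lmarginal_singleton]
    set base : δ → ℝ := fun i => X₀ i + x i with hbase_def
    set g : ℝ → ℝ := fun y => G (Function.update base i₀ y) with hg_def
    have hgm : Measurable g := hG.comp (measurable_update base)
    have e₀ : ∀ t : ℝ, F₀ (Function.update x i₀ t) = ENNReal.ofReal (g t ^ 2) := by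
      intro t
      show ENNReal.ofReal ((G fun i => X₀ i + Function.update x i₀ t i) ^ 2)
          = ENNReal.ofReal (G (Function.update base i₀ t) ^ 2)
      have harg : (fun i => X₀ i + Function.update x i₀ t i)
          = Function.update base i₀ t := by
        funext i
        by_cases hi : i = i₀
        · subst hi
          rw [Function.update_self, Function.update_self, hX₀, zero_add]
        · rw [Function.update_of_ne hi, Function.update_of_ne hi]
      rw [harg]
    have e₁ : ∀ t : ℝ, F₁ (Function.update x i₀ t)
        = ENNReal.ofReal ((g (σ + t) - σ) ^ 2) := by
      intro t
      show ENNReal.ofReal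
            (((G fun i => (X₀ i + if i = i₀ then σ else 0) + Function.update x i₀ t i) - σ) ^ 2)
          = ENNReal.ofReal ((G (Function.update base i₀ (σ + t)) - σ) ^ 2)
      have harg : (fun i => (X₀ i + if i = i₀ then σ else 0) + Function.update x i₀ t i)
          = Function.update base i₀ (σ + t) := by
        funext i
        by_cases hi : i = i₀
        · subst hi
          rw [Function.update_self, Function.update_self, if_pos rfl, hX₀, zero_add]
        · rw [Function.update_of_ne hi, Function.update_of_ne hi, if_neg hi, add_zero]
      rw [harg]
    simp_rw [e₀, e₁]
    exact oneDim_bound hσ hgm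
  -- integrate the pointwise bound over the remaining coordinates
  have hmarg₀ : Measurable (∫⋯∫⁻_{i₀}, F₀ ∂μ) := hF₀m.lmarginal μ
  have hmarg₁ : Measurable (∫⋯∫⁻_{i₀}, F₁ ∂μ) := hF₁m.lmarginal μ
  have hconst : (∫⋯∫⁻_(univ.erase i₀), (fun _ => B) ∂μ) x₀ = B := by
    rw [lmarginal]
    simp [lintegral_const]
  have hadd : (∫⋯∫⁻_(univ.erase i₀),
        (fun x => (∫⋯∫⁻_{i₀}, F₀ ∂μ) x + (∫⋯∫⁻_{i₀}, F₁ ∂μ) x) ∂μ) x₀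
      = (∫⋯∫⁻_(univ.erase i₀), (∫⋯∫⁻_{i₀}, F₀ ∂μ) ∂μ) x₀
        + (∫⋯∫⁻_(univ.erase i₀), (∫⋯∫⁻_{i₀}, F₁ ∂μ) ∂μ) x₀ := by
    rw [lmarginal, lmarginal, lmarginal]
    exact lintegral_add_left (hmarg₀.comp measurable_updateFinset) _
  calc B = (∫⋯∫⁻_(univ.erase i₀), (fun _ => B) ∂μ) x₀ := hconst.symm
    _ ≤ (∫⋯∫⁻_(univ.erase i₀),
          (fun x => (∫⋯∫⁻_{i₀}, F₀ ∂μ) x + (∫⋯∫⁻_{i₀}, F₁ ∂μ) x) ∂μ) x₀ :=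
        lmarginal_mono (fun x => hpt x) x₀
    _ = _ := hadd


lemma B_value {σ : ℝ} (hσ : 0 < σ) :
    ENNReal.ofReal (2 * (Real.exp (-(1/2:ℝ)) / (4 * Real.sqrt (2 * Real.pi))) * σ ^ 2)
      ≤ ENNReal.ofReal (gaussianPDFReal 0 ⟨σ^2, sq_nonneg σ⟩ σ * (σ^2/2) * σ) := by
  apply ENNReal.ofReal_le_ofReal
  have hπ : (0:ℝ) < 2 * Real.pi := by positivity
  have hsq : Real.sqrt (2 * Real.pi) ≠ 0 := by positivity
  unfold gaussianPDFReal
  show _ ≤ (√(2 * π * σ ^ 2))⁻¹ * rexp (-(σ - 0) ^ 2 / (2 * σ ^ 2)) * (σ ^ 2 / 2) * σ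
  have h1 : Real.sqrt (2 * Real.pi * σ ^ 2) = Real.sqrt (2 * Real.pi) * σ := by
    rw [Real.sqrt_mul hπ.le, Real.sqrt_sq hσ.le]
  have h2 : -(σ - 0) ^ 2 / (2 * σ ^ 2) = -(1/2:ℝ) := by
    rw [sub_zero]; rw [div_eq_iff (by positivity)]; ring
  rw [h1, h2]
  rw [mul_inv]
  have h3 : σ^3 * σ⁻¹ = σ^2 := by
    field_simp
  apply le_of_eq
  field_simp
  ring_nf

/-- Core-tensor term of the minimax recovery lower bound
(core-tensor term of the recovery lower bound). -/
theorem sparse_tensor_recovery_core_term_lower_bound :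
    ∃ c : ℝ, 0 < c ∧
      ∀ (d : ℕ), 2 ≤ d →
      ∀ (p r s : Fin d → ℕ) (Js : Finset (Fin d)) (σ : ℝ),
        (∀ l, 1 ≤ r l) →
        (∀ l, 3 * r l ≤ s l) →
        (∀ l, s l ≤ p l) →
        (∀ l, l ∉ Js → s l = p l) →
        0 < σ →
        ∀ Xhat : (TIdx p → ℝ) → (TIdx p → ℝ),
          Measurable Xhat →
          ∃ X : TIdx p → ℝ, inClassF p r s Js X ∧
            ENNReal.ofReal (c * σ ^ 2 * ∏ l, (r l : ℝ)) ≤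
              ∫⁻ Z, ENNReal.ofReal (tfrobSq (fun i => Xhat (fun i' => X i' + Z i') i - X i))
                ∂(gaussianTensor p σ) := by
  refine ⟨Real.exp (-(1/2:ℝ)) / (4 * Real.sqrt (2 * Real.pi)), by positivity, ?_⟩
  set c : ℝ := Real.exp (-(1/2:ℝ)) / (4 * Real.sqrt (2 * Real.pi)) with hc_def
  intro d _hd p r s Js σ hr hs3 hsp _hJs hσ Xhat hXhat
  have hrs : ∀ l, r l ≤ s l := fun l =>
    le_trans (Nat.le_mul_of_pos_left _ (by norm_num)) (hs3 l)
  have hrp : ∀ l, r l ≤ p l := fun l => (hrs l).trans (hsp l)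
  set v : NNReal := ⟨σ^2, sq_nonneg σ⟩ with hv_def
  have hμpi : gaussianTensor p σ = Measure.pi (fun _ : TIdx p => gaussianReal 0 v) := rfl
  -- hypercube of candidate tensors
  set Xe : (TIdx r → Bool) → TIdx p → ℝ :=
    fun ε => embCore hrp (fun j => if ε j then σ else 0) with hXe_def
  set R : (TIdx r → Bool) → ENNReal := fun ε =>
    ∫⁻ Z, ENNReal.ofReal
        (tfrobSq (fun i => Xhat (fun i' => Xe ε i' + Z i') i - Xe ε i))
      ∂(gaussianTensor p σ) with hR_def
  suffices h : ∃ ε, ENNReal.ofReal (c * σ ^ 2 * ∏ l, (r l : ℝ)) ≤ R ε by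
    obtain ⟨ε, hε⟩ := h
    exact ⟨Xe ε, embCore_mem_class p r s Js hrp hrs _, hε⟩
  -- basic measurability
  have hshiftm : ∀ (W : TIdx p → ℝ),
      Measurable fun (Z : TIdx p → ℝ) => (fun i' => W i' + Z i') :=
    fun W => by fun_prop
  have hGm : ∀ i : TIdx p, Measurable fun Y : TIdx p → ℝ => Xhat Y i :=
    fun i => (measurable_pi_apply i).comp hXhat
  -- per-coordinate risks
  set T : (TIdx r → Bool) → TIdx r → ENNReal := fun ε j =>
    ∫⁻ Z, ENNReal.ofReal
        ((Xhat (fun i' => Xe ε i' + Z i') (embIdx hrp j) - Xe ε (embIdx hrp j)) ^ 2)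
      ∂(gaussianTensor p σ) with hT_def
  -- Step A : the total risk dominates the sum of core-coordinate risks
  have hstepA : ∀ ε, ∑ j : TIdx r, T ε j ≤ R ε := by
    intro ε
    have hsum : R ε = ∑ i : TIdx p,
        ∫⁻ Z, ENNReal.ofReal ((Xhat (fun i' => Xe ε i' + Z i') i - Xe ε i) ^ 2)
          ∂(gaussianTensor p σ) := by
      simp only [hR_def]
      have hmeas : ∀ i ∈ (Finset.univ : Finset (TIdx p)), Measurable
          (fun Z : TIdx p → ℝ =>
            ENNReal.ofReal ((Xhat (fun i' => Xe ε i' + Z i') i - Xe ε i) ^ 2)) := by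
        intro i _
        exact ENNReal.measurable_ofReal.comp
          ((((hGm i).comp (hshiftm (Xe ε))).sub_const _).pow_const 2)
      rw [← lintegral_finset_sum _ hmeas]
      congr 1
      funext Z
      rw [tfrobSq]
      exact ENNReal.ofReal_sum_of_nonneg (fun i _ => sq_nonneg _)
    rw [hsum]
    calc ∑ j : TIdx r, T ε j
        = ∑ i ∈ Finset.univ.image (embIdx hrp), ∫⁻ Z, ENNReal.ofReal
            ((Xhat (fun i' => Xe ε i' + Z i') i - Xe ε i) ^ 2)
            ∂(gaussianTensor p σ) := by
          rw [Finset.sum_image (fun j _ j' _ h => embIdx_injective hrp h)]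
      _ ≤ _ := Finset.sum_le_sum_of_subset (Finset.subset_univ _)
  -- Step B : two-point bound for each core coordinate
  set B : ENNReal := ENNReal.ofReal (gaussianPDFReal 0 v σ * (σ^2/2) * σ) with hB_def
  set N : ℕ := Fintype.card (TIdx r) with hN_def
  have hstepB : ∀ j : TIdx r, (2:ENNReal)^(N-1) * B ≤ ∑ ε : TIdx r → Bool, T ε j := by
    intro j
    set e := Equiv.funSplitAt j Bool with he_def
    have hcardRest : Fintype.card ({j' : TIdx r // j' ≠ j} → Bool) = 2^(N-1) := by
      rw [Fintype.card_fun, Fintype.card_bool, Fintype.card_subtype_compl,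
        Fintype.card_subtype_eq]
    have hsum : ∑ ε : TIdx r → Bool, T ε j
        = ∑ x : Bool × ({j' : TIdx r // j' ≠ j} → Bool), T (e.symm x) j :=
      (Equiv.sum_comp e.symm (fun ε => T ε j)).symm
    rw [hsum, Fintype.sum_prod_type_right]
    have hpair : ∀ gR : {j' : TIdx r // j' ≠ j} → Bool,
        B ≤ ∑ b : Bool, T (e.symm (b, gR)) j := by
      intro gR
      set ε₀ := e.symm (false, gR) with hε₀
      set ε₁ := e.symm (true, gR) with hε₁
      have hv0 : ε₀ j = false := by
        rw [hε₀, he_def]; simp [Equiv.funSplitAt, Equiv.piSplitAt]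
      have hv1 : ε₁ j = true := by
        rw [hε₁, he_def]; simp [Equiv.funSplitAt, Equiv.piSplitAt]
      have hvne : ∀ j' : TIdx r, j' ≠ j → ε₀ j' = ε₁ j' := by
        intro j' hj'
        rw [hε₀, hε₁, he_def]
        simp [Equiv.funSplitAt, Equiv.piSplitAt, hj']
      have hX0 : Xe ε₀ (embIdx hrp j) = 0 := by
        simp only [hXe_def]; rw [embCore_embIdx, hv0]; simp
      have hX1σ : Xe ε₁ (embIdx hrp j) = σ := by
        simp only [hXe_def]; rw [embCore_embIdx, hv1]; simp
      have hX01 : (fun i => Xe ε₀ i + (if i = embIdx hrp j then σ else 0)) = Xe ε₁ := by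
        funext i
        by_cases hcore : ∀ l, ((i l : ℕ)) < r l
        · have hi : i = embIdx hrp (fun l => ⟨i l, hcore l⟩) := funext fun l => rfl
          simp only [hXe_def]
          rw [hi, embCore_embIdx, embCore_embIdx]
          by_cases hj : (fun l => (⟨i l, hcore l⟩ : Fin (r l))) = j
          · rw [hj, hv0, hv1]
            simp
          · have hne : embIdx hrp (fun l => ⟨i l, hcore l⟩) ≠ embIdx hrp j :=
              fun hc => hj (embIdx_injective hrp hc)
            rw [if_neg hne, add_zero, hvne _ hj]
        · have hne : ∀ j' : TIdx r, i ≠ embIdx hrp j' := by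
            intro j' hc
            exact hcore (fun l => by rw [hc]; exact (j' l).2)
          simp only [hXe_def]
          rw [embCore_of_ne hrp _ i hne, embCore_of_ne hrp _ i hne,
            if_neg (hne j), add_zero]
      have hT0 : T ε₀ j = ∫⁻ Z, ENNReal.ofReal
          ((Xhat (fun i' => Xe ε₀ i' + Z i') (embIdx hrp j)) ^ 2)
          ∂(Measure.pi (fun _ : TIdx p => gaussianReal 0 v)) := by
        simp only [hT_def, hμpi, hX0]
        simp only [sub_zero]
      have hT1 : T ε₁ j = ∫⁻ Z, ENNReal.ofReal
          ((Xhat (fun i' => Xe ε₀ i' + (if i' = embIdx hrp j then σ else 0) + Z i')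
              (embIdx hrp j) - σ) ^ 2)
          ∂(Measure.pi (fun _ : TIdx p => gaussianReal 0 v)) := by
        simp only [hT_def, hμpi]
        congr 1
        funext Z
        have h1 : (fun i' => Xe ε₁ i' + Z i')
            = fun i' => Xe ε₀ i' + (if i' = embIdx hrp j then σ else 0) + Z i' := by
          funext i'
          rw [← hX01]
        rw [h1, hX1σ]
      rw [Fintype.sum_bool, hT0, hT1, hB_def]
      exact le_trans (pair_bound hσ (hGm (embIdx hrp j)) (Xe ε₀) (embIdx hrp j) hX0)
        (le_of_eq (add_comm _ _))
    calc (2:ENNReal)^(N-1) * B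
        = ∑ _gR : {j' : TIdx r // j' ≠ j} → Bool, B := by
          rw [Finset.sum_const, Finset.card_univ, hcardRest, nsmul_eq_mul]
          norm_cast
      _ ≤ _ := Finset.sum_le_sum (fun gR _ => hpair gR)
  -- combine over coordinates and average over the hypercube
  have hsumR : (N : ENNReal) * ((2:ENNReal)^(N-1) * B) ≤ ∑ ε : TIdx r → Bool, R ε := by
    calc (N : ENNReal) * ((2:ENNReal)^(N-1) * B)
        = ∑ _j : TIdx r, (2:ENNReal)^(N-1) * B := by
          rw [Finset.sum_const, Finset.card_univ, ← hN_def, nsmul_eq_mul]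
      _ ≤ ∑ j : TIdx r, ∑ ε : TIdx r → Bool, T ε j :=
          Finset.sum_le_sum (fun j _ => hstepB j)
      _ = ∑ ε : TIdx r → Bool, ∑ j : TIdx r, T ε j := Finset.sum_comm
      _ ≤ ∑ ε : TIdx r → Bool, R ε := Finset.sum_le_sum (fun ε _ => hstepA ε)
  -- pick a maximizer
  obtain ⟨ε', -, hmax⟩ := Finset.exists_max_image (Finset.univ : Finset (TIdx r → Bool)) R
    ⟨fun _ => false, Finset.mem_univ _⟩
  refine ⟨ε', ?_⟩
  have hNpos : 0 < N := by
    rw [hN_def]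
    have : Nonempty (TIdx r) := ⟨fun l => ⟨0, hr l⟩⟩
    exact Fintype.card_pos
  have hcard : Fintype.card (TIdx r → Bool) = 2 ^ N := by
    rw [Fintype.card_fun, Fintype.card_bool, hN_def]
  have hsum_le : ∑ ε : TIdx r → Bool, R ε ≤ (2:ENNReal)^N * R ε' := by
    calc ∑ ε : TIdx r → Bool, R ε ≤ ∑ _ε : TIdx r → Bool, R ε' :=
          Finset.sum_le_sum (fun ε _ => hmax ε (Finset.mem_univ ε))
      _ = (2:ENNReal)^N * R ε' := by
          rw [Finset.sum_const, Finset.card_univ, hcard, nsmul_eq_mul]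
          norm_cast
  -- cancel the powers of two
  have hkey : (2:ENNReal)^(N-1) * ((N : ENNReal) * B) ≤ (2:ENNReal)^(N-1) * (2 * R ε') := by
    calc (2:ENNReal)^(N-1) * ((N : ENNReal) * B)
        = (N : ENNReal) * ((2:ENNReal)^(N-1) * B) := by ring
      _ ≤ ∑ ε : TIdx r → Bool, R ε := hsumR
      _ ≤ (2:ENNReal)^N * R ε' := hsum_le
      _ = (2:ENNReal)^(N-1) * (2 * R ε') := by
          rw [← mul_assoc, ← pow_succ, Nat.sub_add_cancel hNpos]
  have hcancel : (N : ENNReal) * B ≤ 2 * R ε' := by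
    refine (ENNReal.mul_le_mul_iff_right ?_ ?_).mp hkey
    · exact pow_ne_zero _ (by norm_num)
    · exact ENNReal.pow_ne_top (by norm_num)
  -- final numeric bookkeeping
  have hprod : (∏ l, (r l : ℝ)) = (N : ℝ) := by
    rw [hN_def, Fintype.card_pi]
    simp [Nat.cast_prod]
  have hfinal : (2:ENNReal) * ENNReal.ofReal (c * σ ^ 2 * ∏ l, (r l : ℝ))
      ≤ 2 * R ε' := by
    calc (2:ENNReal) * ENNReal.ofReal (c * σ ^ 2 * ∏ l, (r l : ℝ))
        = ENNReal.ofReal (2 * c * σ ^ 2 * (N : ℝ)) := by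
          rw [hprod, ← ENNReal.ofReal_ofNat 2, ← ENNReal.ofReal_mul (by norm_num)]
          ring_nf
      _ = (N : ENNReal) * ENNReal.ofReal (2 * c * σ ^ 2) := by
          rw [mul_comm (2 * c * σ ^ 2) ((N : ℝ)), ENNReal.ofReal_mul (by positivity),
            ENNReal.ofReal_natCast]
      _ ≤ (N : ENNReal) * B := by
          refine mul_le_mul_right ?_ _
          rw [hB_def, hv_def]
          have := B_value hσ
          calc ENNReal.ofReal (2 * c * σ ^ 2)
              = ENNReal.ofReal (2 * (Real.exp (-(1/2:ℝ)) / (4 * Real.sqrt (2 * Real.pi))) * σ ^ 2) := by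
                rw [hc_def]
            _ ≤ _ := this
      _ ≤ 2 * R ε' := hcancel
  exact (ENNReal.mul_le_mul_iff_right (by norm_num) (by norm_num)).mp hfinal

end
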